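/- arXiv:2310.02394 — 7 statements merged into one kernel-verified Lean document; each statement's English description precedes it below -/
import Mathlib

section
/- Under the missing-data model where at most a δ share of each firm's intermediate input data is missing (0 ≤ δ < 1), the influence vectors satisfy ‖v_U - v_W‖₁ ≤ (δ/α)·(1-α)(2-δ)/(1-δ). -/
open Matrix BigOperators

/-- The influence vector of an input-output matrix `W` with labor share `α`. -/
noncomputable def influence {n : ℕ} (α : ℝ) (W : Matrix (Fin n) (Fin n) ℝ) : Fin n → ℝ :=
  (α / (n : ℝ)) • ((1 - (1 - α) • Wᵀ)⁻¹ *ᵥ fun _ => 1)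


/-- Powers of a row-stochastic nonnegative matrix stay nonneg & row-stochastic. -/
lemma pow_stoch {n : ℕ} (M : Matrix (Fin n) (Fin n) ℝ)
    (h0 : ∀ i j, 0 ≤ M i j) (h1 : ∀ i, ∑ j, M i j = 1) (k : ℕ) :
    (∀ i j, 0 ≤ (M ^ k) i j) ∧ (∀ i, ∑ j, (M ^ k) i j = 1) := by
  induction k with
  | zero =>
    constructor
    · intro i j
      rw [pow_zero, Matrix.one_apply]
      split <;> norm_num
    · intro i
      rw [pow_zero]
      simp [Matrix.one_apply]
  | succ k ih =>
    constructor
    · intro i j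
      rw [pow_succ, Matrix.mul_apply]
      exact Finset.sum_nonneg fun l _ => mul_nonneg (ih.1 i l) (h0 l j)
    · intro i
      rw [pow_succ]
      simp only [Matrix.mul_apply]
      rw [Finset.sum_comm]
      have : ∀ l ∈ Finset.univ, ∑ j, (M ^ k) i l * M l j = (M ^ k) i l := by
        intro l _
        rw [← Finset.mul_sum, h1 l, mul_one]
      rw [Finset.sum_congr rfl this, ih.2 i]

lemma det_unit_one_sub {n : ℕ} (β : ℝ) (hβ0 : 0 ≤ β) (hβ1 : β < 1)
    (M : Matrix (Fin n) (Fin n) ℝ) (h0 : ∀ i j, 0 ≤ M i j) (h1 : ∀ i, ∑ j, M i j = 1) :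
    IsUnit (1 - β • M).det := by
  rw [isUnit_iff_ne_zero]
  intro hdet
  obtain ⟨v, hv0, hv⟩ := Matrix.exists_mulVec_eq_zero_iff.2 hdet
  have he : ∀ i, v i = β * ∑ j, M i j * v j := by
    intro i
    have h := congrFun hv i
    simp only [Matrix.mulVec, dotProduct, Matrix.sub_apply, Matrix.smul_apply,
      smul_eq_mul, sub_mul, Finset.sum_sub_distrib, Matrix.one_apply, ite_mul, one_mul,
      zero_mul, Finset.sum_ite_eq, Finset.mem_univ, if_true, Pi.zero_apply,
      mul_assoc] at h
    rw [Finset.mul_sum]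
    simp only [← mul_assoc]
    simp only [← mul_assoc] at h
    linarith
  obtain ⟨i₀, hi₀⟩ := Function.ne_iff.1 hv0
  obtain ⟨i, -, hmax⟩ := Finset.exists_max_image Finset.univ (fun i => |v i|)
    ⟨i₀, Finset.mem_univ i₀⟩
  have hvi : 0 < |v i| := lt_of_lt_of_le (abs_pos.2 hi₀) (hmax i₀ (Finset.mem_univ i₀))
  have hle : |v i| ≤ β * |v i| := by
    calc |v i| = β * |∑ j, M i j * v j| := by rw [he i, abs_mul, abs_of_nonneg hβ0]
    _ ≤ β * ∑ j, M i j * |v i| := by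
        apply mul_le_mul_of_nonneg_left _ hβ0
        calc |∑ j, M i j * v j| ≤ ∑ j, |M i j * v j| := Finset.abs_sum_le_sum_abs _ _
        _ ≤ ∑ j, M i j * |v i| := by
            apply Finset.sum_le_sum
            intro j _
            rw [abs_mul, abs_of_nonneg (h0 i j)]
            exact mul_le_mul_of_nonneg_left (hmax j (Finset.mem_univ j)) (h0 i j)
    _ = β * |v i| := by rw [← Finset.sum_mul, h1 i, one_mul]
  nlinarith

lemma inv_rowsum {n : ℕ} (β : ℝ) (hβ0 : 0 ≤ β) (hβ1 : β < 1)
    (M : Matrix (Fin n) (Fin n) ℝ) (h0 : ∀ i j, 0 ≤ M i j) (h1 : ∀ i, ∑ j, M i j = 1)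
    (i : Fin n) : ∑ j, (1 - β • M)⁻¹ i j = (1 - β)⁻¹ := by
  have hdet := det_unit_one_sub β hβ0 hβ1 M h0 h1
  have hinv : (1 - β • M)⁻¹ * (1 - β • M) = 1 := Matrix.nonsing_inv_mul _ hdet
  have key : ∑ j, ((1 - β • M)⁻¹ * (1 - β • M)) i j = 1 := by
    rw [hinv]
    simp [Matrix.one_apply]
  simp only [Matrix.mul_apply] at key
  rw [Finset.sum_comm] at key
  have : ∀ l ∈ Finset.univ, ∑ j, (1 - β • M)⁻¹ i l * (1 - β • M) l j
      = (1 - β • M)⁻¹ i l * (1 - β) := by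
    intro l _
    rw [← Finset.mul_sum]
    congr 1
    simp only [Matrix.sub_apply, Matrix.smul_apply, smul_eq_mul, Finset.sum_sub_distrib,
      Matrix.one_apply, Finset.sum_ite_eq, Finset.mem_univ, if_true, ← Finset.mul_sum, h1 l,
      mul_one]
  rw [Finset.sum_congr rfl this, ← Finset.sum_mul] at key
  have hne : (1 : ℝ) - β ≠ 0 := by linarith
  field_simp at key ⊢
  linarith [key]

lemma inv_nonneg_entries {n : ℕ} (β : ℝ) (hβ0 : 0 ≤ β) (hβ1 : β < 1)
    (M : Matrix (Fin n) (Fin n) ℝ) (h0 : ∀ i j, 0 ≤ M i j) (h1 : ∀ i, ∑ j, M i j = 1)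
    (i j : Fin n) : 0 ≤ (1 - β • M)⁻¹ i j := by
  set N := (1 - β • M)⁻¹ with hN
  set x : Matrix (Fin n) (Fin n) ℝ := β • M with hx
  have hdet := det_unit_one_sub β hβ0 hβ1 M h0 h1
  have hinv : (1 - x) * N = 1 := Matrix.mul_nonsing_inv _ hdet
  set C : ℝ := ∑ p, ∑ q, |N p q| with hC
  have hCnn : 0 ≤ C := Finset.sum_nonneg fun p _ =>
    Finset.sum_nonneg fun q _ => abs_nonneg _
  -- key identity : N = partial geometric sum + remainder
  have hid : ∀ K : ℕ, N = (∑ k ∈ Finset.range K, x ^ k) + x ^ K * N := by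
    intro K
    have hg : (∑ k ∈ Finset.range K, x ^ k) * (1 - x) = 1 - x ^ K := by
      have := geom_sum_mul x K
      calc (∑ k ∈ Finset.range K, x ^ k) * (1 - x)
          = -((∑ k ∈ Finset.range K, x ^ k) * (x - 1)) := by noncomm_ring
        _ = -(x ^ K - 1) := by rw [this]
        _ = 1 - x ^ K := by noncomm_ring
    have : (∑ k ∈ Finset.range K, x ^ k) * ((1 - x) * N) = (1 - x ^ K) * N := by
      rw [← mul_assoc, hg]
    rw [hinv, mul_one, sub_mul, one_mul] at this
    rw [this]
    noncomm_ring
  -- bound the remainder entrywise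
  have hbound : ∀ K : ℕ, -(β ^ K * C) ≤ N i j := by
    intro K
    have hxK : x ^ K = β ^ K • M ^ K := by rw [hx, smul_pow]
    have hent := congrFun (congrFun (hid K) i) j
    have hS : 0 ≤ (∑ k ∈ Finset.range K, x ^ k) i j := by
      rw [Matrix.sum_apply]
      apply Finset.sum_nonneg
      intro k _
      rw [hx, smul_pow, Matrix.smul_apply, smul_eq_mul]
      exact mul_nonneg (pow_nonneg hβ0 k) ((pow_stoch M h0 h1 k).1 i j)
    have hrem : -(β ^ K * C) ≤ (x ^ K * N) i j := by
      rw [hxK, Matrix.smul_mul, Matrix.smul_apply, smul_eq_mul]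
      have habs : |(M ^ K * N) i j| ≤ C := by
        rw [Matrix.mul_apply]
        calc |∑ l, (M ^ K) i l * N l j| ≤ ∑ l, |(M ^ K) i l * N l j| :=
              Finset.abs_sum_le_sum_abs _ _
          _ ≤ ∑ l, |N l j| := by
              apply Finset.sum_le_sum
              intro l _
              rw [abs_mul, abs_of_nonneg ((pow_stoch M h0 h1 K).1 i l)]
              have hle1 : (M ^ K) i l ≤ 1 := by
                rw [← (pow_stoch M h0 h1 K).2 i]
                exact Finset.single_le_sum
                  (fun q _ => (pow_stoch M h0 h1 K).1 i q) (Finset.mem_univ l)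
              nlinarith [abs_nonneg (N l j)]
          _ ≤ C := by
              rw [hC]
              apply Finset.sum_le_sum
              intro p _
              exact Finset.single_le_sum (fun q _ => abs_nonneg (N p q)) (Finset.mem_univ j)
      have h2 : -C ≤ (M ^ K * N) i j := by
        have := abs_le.1 habs
        linarith [this.1]
      have hβK : 0 ≤ β ^ K := pow_nonneg hβ0 K
      nlinarith
    have : N i j = (∑ k ∈ Finset.range K, x ^ k) i j + (x ^ K * N) i j := by
      rw [hent]; rfl
    linarith
  have hlim : Filter.Tendsto (fun K : ℕ => -(β ^ K * C)) Filter.atTop (nhds 0) := by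
    have h := (tendsto_pow_atTop_nhds_zero_of_lt_one hβ0 hβ1).mul_const C
    simpa using h.neg
  exact le_of_tendsto hlim (Filter.Eventually.of_forall hbound)

/-- Rewrite `influence` in terms of column sums of the inverse of `1 - (1-α)•W`. -/
lemma influence_eq {n : ℕ} (α : ℝ) (W : Matrix (Fin n) (Fin n) ℝ) (i : Fin n) :
    influence α W i = (α / n) * ∑ k, (1 - (1 - α) • W)⁻¹ k i := by
  have ht : (1 : Matrix (Fin n) (Fin n) ℝ) - (1 - α) • Wᵀ
      = ((1 : Matrix (Fin n) (Fin n) ℝ) - (1 - α) • W)ᵀ := by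
    rw [Matrix.transpose_sub, Matrix.transpose_one, Matrix.transpose_smul]
  simp only [influence, ht, ← Matrix.transpose_nonsing_inv, Pi.smul_apply, smul_eq_mul]
  congr 1
  simp [Matrix.mulVec, dotProduct, Matrix.transpose_apply]

/-- If at most a `δ` share of each firm's intermediate input data is missing, then
`‖v_U - v_W‖₁ ≤ (δ/α)·(1-α)(2-δ)/(1-δ)`. -/
theorem influence_missing_data_bound (n : ℕ) (α δ : ℝ)
    (hα0 : 0 < α) (hα1 : α < 1) (hδ0 : 0 ≤ δ) (hδ1 : δ < 1)
    (W U : Matrix (Fin n) (Fin n) ℝ) (c : Fin n → Fin n → ℝ) (d : Fin n → ℝ)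
    (hWnn : ∀ i j, 0 ≤ W i j) (hWrow : ∀ i, ∑ j, W i j = 1)
    (hd : ∀ i, d i ≤ δ)
    (hc0 : ∀ i j, 0 ≤ c i j) (hcw : ∀ i j, c i j ≤ W i j)
    (hcd : ∀ i, ∑ j, c i j = d i)
    (hU : ∀ i j, U i j = (W i j - c i j) / (1 - d i)) :
    ∑ i, |influence α U i - influence α W i| ≤ (δ / α) * ((1 - α) * (2 - δ) / (1 - δ)) := by
  have hRHS : 0 ≤ (δ / α) * ((1 - α) * (2 - δ) / (1 - δ)) := by
    apply mul_nonneg (div_nonneg hδ0 hα0.le)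
    apply div_nonneg (mul_nonneg (by linarith) (by linarith)) (by linarith)
  rcases Nat.eq_zero_or_pos n with hn | hn
  · subst hn
    simpa using hRHS
  have hnR : (0:ℝ) < n := by exact_mod_cast hn
  have hβ0 : (0:ℝ) ≤ 1 - α := by linarith
  have hβ1 : 1 - α < 1 := by linarith
  -- facts about d and U
  have hd0 : ∀ i, 0 ≤ d i := fun i =>
    (hcd i) ▸ Finset.sum_nonneg fun j _ => hc0 i j
  have hd1 : ∀ i, d i < 1 := fun i => lt_of_le_of_lt (hd i) hδ1
  have hdpos : ∀ i, (0:ℝ) < 1 - d i := fun i => by linarith [hd1 i]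
  have hUnn : ∀ i j, 0 ≤ U i j := by
    intro i j
    rw [hU i j]
    exact div_nonneg (by linarith [hcw i j]) (hdpos i).le
  have hUrow : ∀ i, ∑ j, U i j = 1 := by
    intro i
    have : ∑ j, U i j = (∑ j, (W i j - c i j)) / (1 - d i) := by
      rw [Finset.sum_div]
      exact Finset.sum_congr rfl fun j _ => hU i j
    rw [this, Finset.sum_sub_distrib, hWrow i, hcd i]
    exact div_self (ne_of_gt (hdpos i))
  set NW := (1 - (1 - α) • W)⁻¹ with hNW
  set NU := (1 - (1 - α) • U)⁻¹ with hNU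
  have hdetW := det_unit_one_sub (1-α) hβ0 hβ1 W hWnn hWrow
  have hdetU := det_unit_one_sub (1-α) hβ0 hβ1 U hUnn hUrow
  have hNWnn := inv_nonneg_entries (1-α) hβ0 hβ1 W hWnn hWrow
  have hNUnn := inv_nonneg_entries (1-α) hβ0 hβ1 U hUnn hUrow
  have hNWrow : ∀ i, ∑ j, NW i j = 1/α := by
    intro i
    rw [hNW, inv_rowsum (1-α) hβ0 hβ1 W hWnn hWrow i]
    norm_num
  have hNUrow : ∀ i, ∑ j, NU i j = 1/α := by
    intro i
    rw [hNU, inv_rowsum (1-α) hβ0 hβ1 U hUnn hUrow i]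
    norm_num
  -- the resolvent difference identity
  have hdiff : NU - NW = (1 - α) • (NU * (U - W) * NW) := by
    have hAN : (1 - (1 - α) • W) * NW = 1 := Matrix.mul_nonsing_inv _ hdetW
    have hNB : NU * (1 - (1 - α) • U) = 1 := Matrix.nonsing_inv_mul _ hdetU
    have h1 : NU - NW = NU * ((1 - (1 - α) • W) * NW) - (NU * (1 - (1 - α) • U)) * NW := by
      rw [hAN, hNB, mul_one, one_mul]
    have h2 : NU * ((1 - (1 - α) • W) * NW) - (NU * (1 - (1 - α) • U)) * NW
        = NU * ((((1 - (1 - α) • W)) - ((1 - (1 - α) • U))) * NW) := by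
      noncomm_ring
    have h3 : ((1 : Matrix (Fin n) (Fin n) ℝ) - (1 - α) • W) - (1 - (1 - α) • U)
        = (1 - α) • U - (1 - α) • W := by abel
    rw [h1, h2, h3, ← smul_sub, Matrix.smul_mul, Matrix.mul_smul, ← Matrix.mul_assoc]
  set P := NU * (U - W) * NW with hP
  have hkey : ∀ i, influence α U i - influence α W i = (α / n) * ((1 - α) * ∑ k, P k i) := by
    intro i
    rw [influence_eq, influence_eq, ← hNW, ← hNU, ← mul_sub, ← Finset.sum_sub_distrib]
    congr 1
    have h1 : ∀ k, NU k i - NW k i = (1 - α) * P k i := by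
      intro k
      have := congrFun (congrFun hdiff k) i
      simpa [Matrix.sub_apply, Matrix.smul_apply, Pi.sub_apply, Pi.smul_apply,
        smul_eq_mul] using this
    rw [Finset.sum_congr rfl fun k _ => h1 k, ← Finset.mul_sum]
  -- ℓ¹-bound on rows of U - W
  have hE : ∀ l, ∑ m, |U l m - W l m| ≤ 2 * δ := by
    intro l
    have hpt : ∀ m, |U l m - W l m|
        ≤ (d l * (W l m - c l m) + (1 - d l) * c l m) / (1 - d l) := by
      intro m
      have heq : U l m - W l m = (d l * W l m - c l m) / (1 - d l) := by
        rw [hU l m]; field_simp [ne_of_gt (hdpos l)]; ring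
      rw [heq, abs_div, abs_of_pos (hdpos l)]
      gcongr
      · linarith [hdpos l]
      · rw [abs_le]
        constructor <;> nlinarith [hc0 l m, hcw l m, hWnn l m, hd0 l, hd1 l]
    calc ∑ m, |U l m - W l m|
        ≤ ∑ m, (d l * (W l m - c l m) + (1 - d l) * c l m) / (1 - d l) :=
          Finset.sum_le_sum fun m _ => hpt m
      _ = 2 * d l := by
          rw [← Finset.sum_div]
          have : ∑ m, (d l * (W l m - c l m) + (1 - d l) * c l m)
              = 2 * d l * (1 - d l) := by
            simp only [Finset.sum_add_distrib, ← Finset.mul_sum, Finset.sum_sub_distrib,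
              hWrow l, hcd l]
            ring
          rw [this, mul_div_assoc, div_self (ne_of_gt (hdpos l)), mul_one]
      _ ≤ 2 * δ := by linarith [hd l]
  -- column-sum bound for P
  have hQ : ∀ k, ∑ m, |(NU * (U - W)) k m| ≤ (1/α) * (2*δ) := by
    intro k
    calc ∑ m, |(NU * (U - W)) k m|
        ≤ ∑ m, ∑ l, NU k l * |U l m - W l m| := by
          apply Finset.sum_le_sum
          intro m _
          rw [Matrix.mul_apply]
          refine (Finset.abs_sum_le_sum_abs _ _).trans ?_
          apply Finset.sum_le_sum
          intro l _
          rw [abs_mul, abs_of_nonneg (hNUnn k l), Matrix.sub_apply]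
      _ = ∑ l, NU k l * ∑ m, |U l m - W l m| := by
          rw [Finset.sum_comm]
          exact Finset.sum_congr rfl fun l _ => by rw [← Finset.mul_sum]
      _ ≤ ∑ l, NU k l * (2*δ) := by
          apply Finset.sum_le_sum
          intro l _
          exact mul_le_mul_of_nonneg_left (hE l) (hNUnn k l)
      _ = (1/α) * (2*δ) := by rw [← Finset.sum_mul, hNUrow k]
  have hPb : ∀ k, ∑ i, |P k i| ≤ (1/α) * (2*δ) * (1/α) := by
    intro k
    calc ∑ i, |P k i|
        ≤ ∑ i, ∑ m, |(NU * (U - W)) k m| * NW m i := by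
          apply Finset.sum_le_sum
          intro i _
          rw [hP, Matrix.mul_apply]
          refine (Finset.abs_sum_le_sum_abs _ _).trans ?_
          apply Finset.sum_le_sum
          intro m _
          rw [abs_mul, abs_of_nonneg (hNWnn m i)]
      _ = ∑ m, |(NU * (U - W)) k m| * ∑ i, NW m i := by
          rw [Finset.sum_comm]
          exact Finset.sum_congr rfl fun m _ => by rw [← Finset.mul_sum]
      _ = ∑ m, |(NU * (U - W)) k m| * (1/α) := by
          exact Finset.sum_congr rfl fun m _ => by rw [hNWrow m]
      _ = (∑ m, |(NU * (U - W)) k m|) * (1/α) := by rw [← Finset.sum_mul]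
      _ ≤ (1/α) * (2*δ) * (1/α) := by
          apply mul_le_mul_of_nonneg_right (hQ k)
          positivity
  -- assemble
  have hc1 : (0:ℝ) ≤ α / n := by positivity
  calc ∑ i, |influence α U i - influence α W i|
      = ∑ i, (α / n) * ((1 - α) * |∑ k, P k i|) := by
        refine Finset.sum_congr rfl fun i _ => ?_
        rw [hkey i, abs_mul, abs_mul, abs_of_nonneg hc1, abs_of_nonneg hβ0]
    _ ≤ ∑ i, (α / n) * ((1 - α) * ∑ k, |P k i|) := by
        apply Finset.sum_le_sum
        intro i _
        apply mul_le_mul_of_nonneg_left _ hc1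
        apply mul_le_mul_of_nonneg_left _ hβ0
        exact Finset.abs_sum_le_sum_abs _ _
    _ = (α / n) * ((1 - α) * ∑ k, ∑ i, |P k i|) := by
        simp only [← Finset.mul_sum]
        rw [Finset.sum_comm]
    _ ≤ (α / n) * ((1 - α) * ∑ _k : Fin n, (1/α) * (2*δ) * (1/α)) := by
        apply mul_le_mul_of_nonneg_left _ hc1
        apply mul_le_mul_of_nonneg_left _ hβ0
        exact Finset.sum_le_sum fun k _ => hPb k
    _ = 2 * δ * (1 - α) / α := by
        rw [Finset.sum_const, Finset.card_univ, Fintype.card_fin, nsmul_eq_mul]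
        field_simp
    _ ≤ (δ / α) * ((1 - α) * (2 - δ) / (1 - δ)) := by
        have h2δ : 2 * δ ≤ δ * (2 - δ) / (1 - δ) := by
          rw [le_div_iff₀ (by linarith : (0:ℝ) < 1 - δ)]
          nlinarith
        have heq : (δ / α) * ((1 - α) * (2 - δ) / (1 - δ))
            = (δ * (2 - δ) / (1 - δ)) * ((1 - α) / α) := by
          field_simp
        rw [heq]
        calc 2 * δ * (1 - α) / α = (2 * δ) * ((1 - α) / α) := by ring
          _ ≤ (δ * (2 - δ) / (1 - δ)) * ((1 - α) / α) := by
              apply mul_le_mul_of_nonneg_right h2δ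
              positivity
end

section
/- Let n > 2 and α ∈ (0,1). Define W by w_{1i} = w_{2i} = 1/(n-1) for i ≠ 1 (resp. i ≠ 2), w_{j1} = 1-δ and w_{j2} = δ for j > 2, all other entries 0; let U be obtained by setting δ = 0. Then the first coefficients of the influence vectors satisfy x - a = -(1-α)δ(n-2)(n-1)/(n(2n-3-α(n-2))), and the second coefficients satisfy y - b = (1-α)δ(n-2)(n-1)/(n(2n-3-α(n-2))). -/
open Matrix BigOperators

lemma sum_split_aux (n : ℕ) (hn : 2 < n) (i : Fin n) (f : Fin n → ℝ) (A B C E : ℝ)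
    (hf : ∀ j : Fin n, f j =
      (if j.val = 0 then A else if j.val = 1 then B else C) + (if j = i then E else 0)) :
    ∑ j, f j = A + B + ((n : ℝ) - 2) * C + E := by
  have h0 : (0 : ℕ) < n := by omega
  have h1 : (1 : ℕ) < n := by omega
  have key : ∀ j : Fin n, f j =
      C + ((if j = (⟨0, h0⟩ : Fin n) then A - C else 0)
        + (if j = (⟨1, h1⟩ : Fin n) then B - C else 0)) + (if j = i then E else 0) := by
    intro j
    rw [hf]
    by_cases hj0 : j.val = 0 <;> by_cases hj1 : j.val = 1 <;>
      simp [Fin.ext_iff, hj0, hj1] <;> first | omega | ring1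
  rw [Finset.sum_congr rfl fun j _ => key j]
  simp [Finset.sum_add_distrib, Finset.sum_ite_eq', Finset.card_univ]
  push_cast
  ring

lemma influence_formula (n : ℕ) (hn : 2 < n) (α δ : ℝ)
    (hα0 : 0 < α) (hα1 : α < 1) (hδ0 : 0 ≤ δ) (hδ1 : δ ≤ 1)
    (W : Matrix (Fin n) (Fin n) ℝ)
    (hW : ∀ i j : Fin n, W i j =
      if i.val = 0 then (if j.val = 0 then 0 else 1 / ((n : ℝ) - 1))
      else if i.val = 1 then (if j.val = 1 then 0 else 1 / ((n : ℝ) - 1))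
      else if j.val = 0 then 1 - δ else if j.val = 1 then δ else 0) :
    influence α W = fun i =>
      (α / (n : ℝ)) * ((if i.val = 0 then ((n:ℝ)-1)*(1+(1-α)*((n:ℝ)-2)*(1-δ))
        else if i.val = 1 then ((n:ℝ)-1)*(1+(1-α)*((n:ℝ)-2)*δ)
        else ((n:ℝ)-1+(1-α))) / ((n:ℝ)-1-(1-α)-(1-α)^2*((n:ℝ)-2))) := by
  have hn2 : (2:ℝ) < (n:ℝ) := by exact_mod_cast hn
  have hn1 : ((n:ℝ) - 1) ≠ 0 := by linarith
  set D : ℝ := (n:ℝ)-1-(1-α)-(1-α)^2*((n:ℝ)-2) with hDdef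
  have hD : D = α * (2*(n:ℝ)-3-α*((n:ℝ)-2)) := by rw [hDdef]; ring
  have hQ : 0 < 2*(n:ℝ)-3-α*((n:ℝ)-2) := by nlinarith
  have hDpos : 0 < D := by rw [hD]; exact mul_pos hα0 hQ
  have hDne : D ≠ 0 := ne_of_gt hDpos
  -- nonnegativity and diagonal/row sum facts
  have hWnn : ∀ i j : Fin n, 0 ≤ W i j := by
    intro i j; rw [hW]
    have hpos : (0:ℝ) < (n:ℝ)-1 := by linarith
    have : (0:ℝ) < 1/((n:ℝ)-1) := by positivity
    split_ifs <;> linarith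
  have hWdiag : ∀ k : Fin n, W k k = 0 := by
    intro k; rw [hW]
    split_ifs with h1 h2 h3 h4 h5 <;> first | rfl | omega
  -- the candidate solution
  set u : Fin n → ℝ := fun i =>
    (if i.val = 0 then ((n:ℝ)-1)*(1+(1-α)*((n:ℝ)-2)*(1-δ))
      else if i.val = 1 then ((n:ℝ)-1)*(1+(1-α)*((n:ℝ)-2)*δ)
      else ((n:ℝ)-1+(1-α))) / D with hu
  set A : Matrix (Fin n) (Fin n) ℝ := 1 - (1 - α) • Wᵀ with hA
  have hAentry : ∀ i j : Fin n, A i j = (if i = j then 1 else 0) - (1-α) * W j i := by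
    intro i j; rw [hA]; simp [Matrix.sub_apply, Matrix.one_apply]
  have h0 : (0:ℕ) < n := by omega
  have h1 : (1:ℕ) < n := by omega
  have hu0 : u ⟨0, h0⟩ = ((n:ℝ)-1)*(1+(1-α)*((n:ℝ)-2)*(1-δ)) / D := by simp [hu]
  have hu1 : u ⟨1, h1⟩ = ((n:ℝ)-1)*(1+(1-α)*((n:ℝ)-2)*δ) / D := by simp [hu]
  have hAu : A *ᵥ u = fun _ => 1 := by
    funext i
    show ∑ j, A i j * u j = 1
    rcases lt_trichotomy i.val 1 with hi | hi | hi
    · -- i.val = 0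
      have hi0 : i.val = 0 := by omega
      rw [sum_split_aux n hn i _
        (1 * (((n:ℝ)-1)*(1+(1-α)*((n:ℝ)-2)*(1-δ)) / D))
        ((0 - (1-α) * (1/((n:ℝ)-1))) * (((n:ℝ)-1)*(1+(1-α)*((n:ℝ)-2)*δ) / D))
        ((0 - (1-α) * (1-δ)) * (((n:ℝ)-1+(1-α)) / D)) 0 ?_]
      · field_simp
        ring
      · intro j
        rw [hAentry i j, hW j i, hu]
        by_cases hj0 : j.val = 0 <;> by_cases hj1 : j.val = 1 <;>
          simp [Fin.ext_iff, hj0, hj1, hi0, eq_comm] <;> first | omega | ring1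
    · -- i.val = 1
      rw [sum_split_aux n hn i _
        ((0 - (1-α) * (1/((n:ℝ)-1))) * (((n:ℝ)-1)*(1+(1-α)*((n:ℝ)-2)*(1-δ)) / D))
        (1 * (((n:ℝ)-1)*(1+(1-α)*((n:ℝ)-2)*δ) / D))
        ((0 - (1-α) * δ) * (((n:ℝ)-1+(1-α)) / D)) 0 ?_]
      · field_simp
        ring
      · intro j
        rw [hAentry i j, hW j i, hu]
        by_cases hj0 : j.val = 0 <;> by_cases hj1 : j.val = 1 <;>
          simp [Fin.ext_iff, hj0, hj1, hi, eq_comm] <;> first | omega | ring1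
    · -- i.val ≥ 2
      have hi0 : ¬ i.val = 0 := by omega
      have hi1 : ¬ i.val = 1 := by omega
      rw [sum_split_aux n hn i _
        ((0 - (1-α) * (1/((n:ℝ)-1))) * (((n:ℝ)-1)*(1+(1-α)*((n:ℝ)-2)*(1-δ)) / D))
        ((0 - (1-α) * (1/((n:ℝ)-1))) * (((n:ℝ)-1)*(1+(1-α)*((n:ℝ)-2)*δ) / D))
        0 (((n:ℝ)-1+(1-α)) / D) ?_]
      · field_simp
        ring
      · intro j
        rw [hAentry i j, hW j i, hu]
        by_cases hj0 : j.val = 0 <;> by_cases hj1 : j.val = 1 <;>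
          by_cases hji : j = i <;>
          simp [Fin.ext_iff, hj0, hj1, hi0, hi1, hji, eq_comm] <;>
          first | omega | ring1 | (rw [if_neg (show ¬((i:ℕ) = (j:ℕ)) from fun h => hji (Fin.ext h.symm))])
  have hdet : IsUnit A.det := by
    refine isUnit_iff_ne_zero.mpr (det_ne_zero_of_sum_col_lt_diag ?_)
    intro k
    have hdiag : A k k = 1 := by rw [hAentry, if_pos rfl, hWdiag, mul_zero, sub_zero]
    have hrow : ∑ i, W k i = 1 := by
      rcases lt_trichotomy k.val 1 with hk | hk | hk
      · have hk0 : k.val = 0 := by omega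
        rw [sum_split_aux n hn k _ 0 (1/((n:ℝ)-1)) (1/((n:ℝ)-1)) 0 ?_]
        · field_simp
          ring
        · intro j; rw [hW k j]
          by_cases hj0 : j.val = 0 <;> by_cases hj1 : j.val = 1 <;>
            simp [hj0, hj1, hk0] <;> first | omega | ring1
      · have hk0 : ¬ k.val = 0 := by omega
        rw [sum_split_aux n hn k _ (1/((n:ℝ)-1)) 0 (1/((n:ℝ)-1)) 0 ?_]
        · field_simp
          ring
        · intro j; rw [hW k j]
          by_cases hj0 : j.val = 0 <;> by_cases hj1 : j.val = 1 <;>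
            simp [hj0, hj1, hk0, hk] <;> first | omega | ring1
      · have hk0 : ¬ k.val = 0 := by omega
        have hk1 : ¬ k.val = 1 := by omega
        rw [sum_split_aux n hn k _ (1-δ) δ 0 0 ?_]
        · ring
        · intro j; rw [hW k j]
          by_cases hj0 : j.val = 0 <;> by_cases hj1 : j.val = 1 <;>
            simp [hj0, hj1, hk0, hk1] <;> first | omega | ring1
    have hnorm : ∀ i ∈ Finset.univ.erase k, ‖A i k‖ = (1-α) * W k i := by
      intro i hik
      have hik' : i ≠ k := Finset.ne_of_mem_erase hik
      rw [hAentry, if_neg hik', zero_sub, norm_neg, Real.norm_eq_abs,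
        abs_of_nonneg (mul_nonneg (by linarith) (hWnn k i))]
    rw [Finset.sum_congr rfl hnorm, ← Finset.mul_sum,
      Finset.sum_erase_eq_sub (Finset.mem_univ k), hrow, hWdiag, hdiag]
    rw [norm_one]
    linarith
  have key : A⁻¹ *ᵥ (fun _ => 1) = u := by
    rw [← hAu, Matrix.mulVec_mulVec, Matrix.nonsing_inv_mul A hdet, Matrix.one_mulVec]
  funext i
  show (α / (n : ℝ)) • ((1 - (1 - α) • Wᵀ)⁻¹ *ᵥ fun _ => 1) i = _
  rw [← hA, key]
  simp [hu, div_eq_mul_inv]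

/-- For the lower-bound construction `W` (rows `1,2` uniform, rows `j > 2` with
weight `1-δ` to firm `1` and `δ` to firm `2`) and `U` obtained by setting `δ = 0`,
the first two coordinates of the influence vectors differ by exactly
`∓(1-α)δ(n-2)(n-1)/(n(2n-3-α(n-2)))`. -/
theorem influence_difference_construction (n : ℕ) (hn : 2 < n) (α δ : ℝ)
    (hα0 : 0 < α) (hα1 : α < 1) (hδ0 : 0 ≤ δ) (hδ1 : δ < 1)
    (W U : Matrix (Fin n) (Fin n) ℝ)
    (hW : ∀ i j : Fin n, W i j =
      if i.val = 0 then (if j.val = 0 then 0 else 1 / ((n : ℝ) - 1))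
      else if i.val = 1 then (if j.val = 1 then 0 else 1 / ((n : ℝ) - 1))
      else if j.val = 0 then 1 - δ else if j.val = 1 then δ else 0)
    (hU : ∀ i j : Fin n, U i j =
      if i.val = 0 then (if j.val = 0 then 0 else 1 / ((n : ℝ) - 1))
      else if i.val = 1 then (if j.val = 1 then 0 else 1 / ((n : ℝ) - 1))
      else if j.val = 0 then 1 else 0) :
    influence α W ⟨0, by omega⟩ - influence α U ⟨0, by omega⟩ =
      -((1 - α) * δ * ((n : ℝ) - 2) * ((n : ℝ) - 1)) /
        ((n : ℝ) * (2 * (n : ℝ) - 3 - α * ((n : ℝ) - 2))) ∧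
    influence α W ⟨1, by omega⟩ - influence α U ⟨1, by omega⟩ =
      ((1 - α) * δ * ((n : ℝ) - 2) * ((n : ℝ) - 1)) /
        ((n : ℝ) * (2 * (n : ℝ) - 3 - α * ((n : ℝ) - 2))) := by
  have hn2 : (2:ℝ) < (n:ℝ) := by exact_mod_cast hn
  have hU' : ∀ i j : Fin n, U i j =
      if i.val = 0 then (if j.val = 0 then 0 else 1 / ((n : ℝ) - 1))
      else if i.val = 1 then (if j.val = 1 then 0 else 1 / ((n : ℝ) - 1))
      else if j.val = 0 then 1 - (0:ℝ) else if j.val = 1 then (0:ℝ) else 0 := by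
    intro i j; rw [hU]; split_ifs <;> norm_num
  have hWf := influence_formula n hn α δ hα0 hα1 hδ0 (le_of_lt hδ1) W hW
  have hUf := influence_formula n hn α 0 hα0 hα1 le_rfl zero_le_one U hU'
  have hQ : 0 < 2*(n:ℝ)-3-α*((n:ℝ)-2) := by nlinarith
  have hDne : ((n:ℝ)-1-(1-α)-(1-α)^2*((n:ℝ)-2)) ≠ 0 := by
    have h : (n:ℝ)-1-(1-α)-(1-α)^2*((n:ℝ)-2) = α * (2*(n:ℝ)-3-α*((n:ℝ)-2)) := by ring
    rw [h]; exact ne_of_gt (mul_pos hα0 hQ)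
  have hnne : (n:ℝ) ≠ 0 := by linarith
  have hQne : (2*(n:ℝ)-3-α*((n:ℝ)-2)) ≠ 0 := ne_of_gt hQ
  have hane : α ≠ 0 := ne_of_gt hα0
  constructor
  · rw [hWf, hUf]
    norm_num
    rw [show (n:ℝ)-1-(1-α)-(1-α)^2*((n:ℝ)-2) = α * (2*(n:ℝ)-3-α*((n:ℝ)-2)) by ring]; field_simp
    ring
  · rw [hWf, hUf]
    norm_num
    rw [show (n:ℝ)-1-(1-α)-(1-α)^2*((n:ℝ)-2) = α * (2*(n:ℝ)-3-α*((n:ℝ)-2)) by ring]; field_simp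
    ring
end

section
/- In a network of n ≥ 2 firms with row-stochastic input-output matrix W satisfying w_{ii} = 0 for all i, every coefficient of the influence vector v_W = (α/n)(I-(1-α)W')⁻¹𝟏 is at most (1 - α(n-1)/n)/(2-α). -/
open Matrix BigOperators

attribute [local instance] Matrix.linftyOpNormedRing Matrix.linftyOpNormedAlgebra

/-- Every coefficient of the influence vector of a row-stochastic matrix with zero
diagonal is at most `(1 - α(n-1)/n)/(2-α)`. -/
theorem influence_coefficient_upper_bound (n : ℕ) (hn : 2 ≤ n) (α : ℝ)
    (hα0 : 0 < α) (hα1 : α < 1)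
    (W : Matrix (Fin n) (Fin n) ℝ)
    (hnn : ∀ i j, 0 ≤ W i j) (hrow : ∀ i, ∑ j, W i j = 1)
    (hdiag : ∀ i, W i i = 0) :
    ∀ i, influence α W i ≤ (1 - α * ((n : ℝ) - 1) / (n : ℝ)) / (2 - α) := by
  haveI : CompleteSpace (Matrix (Fin n) (Fin n) ℝ) := FiniteDimensional.complete ℝ _
  have hn0 : (0:ℝ) < (n:ℝ) := by positivity
  have hnne : (n:ℝ) ≠ 0 := ne_of_gt hn0
  set B : Matrix (Fin n) (Fin n) ℝ := (1 - α) • W with hBdef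
  -- entries of W are at most 1
  have hW1 : ∀ i j, W i j ≤ 1 := by
    intro i j
    calc W i j ≤ ∑ k, W i k :=
          Finset.single_le_sum (fun k _ => hnn i k) (Finset.mem_univ j)
      _ = 1 := hrow i
  -- norm of B is small
  have hWnorm : ‖W‖ ≤ 1 := by
    rw [Matrix.linfty_opNorm_def]
    rw [show (1:ℝ) = ((1:NNReal):ℝ) from rfl, NNReal.coe_le_coe]
    apply Finset.sup_le
    intro i _
    rw [← NNReal.coe_le_coe]
    push_cast
    calc ∑ j, ‖W i j‖ = ∑ j, W i j := Finset.sum_congr rfl fun j _ => by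
          rw [Real.norm_eq_abs, abs_of_nonneg (hnn i j)]
      _ ≤ 1 := le_of_eq (hrow i)
  have hB : ‖B‖ < 1 := by
    rw [hBdef, norm_smul, Real.norm_eq_abs, abs_of_nonneg (by linarith : (0:ℝ) ≤ 1 - α)]
    calc (1 - α) * ‖W‖ ≤ (1 - α) * 1 :=
          mul_le_mul_of_nonneg_left hWnorm (by linarith)
      _ < 1 := by linarith
  -- entries of powers of B are nonnegative
  have hBnn : ∀ i j, 0 ≤ B i j := by
    intro i j
    simp only [hBdef, Matrix.smul_apply, smul_eq_mul]
    exact mul_nonneg (by linarith) (hnn i j)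
  have hpow : ∀ (k : ℕ) (i j : Fin n), 0 ≤ (B ^ k) i j := by
    intro k
    induction k with
    | zero =>
      intro i j
      rw [pow_zero, Matrix.one_apply]
      split <;> norm_num
    | succ k ih =>
      intro i j
      rw [pow_succ, Matrix.mul_apply]
      exact Finset.sum_nonneg fun l _ => mul_nonneg (ih i l) (hBnn l j)
  -- the inverse of 1 - B is the geometric series, hence entrywise nonnegative
  have hu : IsUnit (1 - B) := isUnit_one_sub_of_norm_lt_one hB
  have hinv : (1 - B)⁻¹ = ∑' k : ℕ, B ^ k := by
    rw [Matrix.nonsing_inv_eq_ringInverse, ← geom_series_eq_inverse B hB]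
    rfl
  have hinvnn : ∀ i j, 0 ≤ (1 - B)⁻¹ i j := by
    intro i j
    rw [hinv]
    let e : Matrix (Fin n) (Fin n) ℝ →ₗ[ℝ] ℝ :=
      { toFun := fun M => M i j, map_add' := fun _ _ => rfl, map_smul' := fun _ _ => rfl }
    have h2 := (summable_geometric_of_norm_lt_one hB).hasSum.mapL
      (LinearMap.toContinuousLinearMap e)
    simp only [LinearMap.coe_toContinuousLinearMap'] at h2
    show 0 ≤ e (∑' k : ℕ, B ^ k)
    exact hasSum_le (fun k => hpow k i j) hasSum_zero h2
  -- the matrix in the definition of influence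
  set A : Matrix (Fin n) (Fin n) ℝ := 1 - (1 - α) • Wᵀ with hAdef
  have hAT : A = (1 - B)ᵀ := by
    rw [hAdef, hBdef, Matrix.transpose_sub, Matrix.transpose_one, Matrix.transpose_smul]
  have hAinv : A⁻¹ = ((1 - B)⁻¹)ᵀ := by
    rw [hAT, Matrix.transpose_nonsing_inv]
  have hAinvnn : ∀ i j, 0 ≤ A⁻¹ i j := by
    intro i j; rw [hAinv]; exact hinvnn j i
  have hAdet : IsUnit A.det := by
    rw [hAT, Matrix.det_transpose]
    exact (Matrix.isUnit_iff_isUnit_det _).mp hu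
  -- the influence vector
  set v : Fin n → ℝ := influence α W with hvdef
  have hv : v = (α / (n:ℝ)) • (A⁻¹ *ᵥ fun _ => 1) := rfl
  -- nonnegativity of v
  have hv0 : ∀ i, 0 ≤ v i := by
    intro i
    rw [hv]
    simp only [Pi.smul_apply, smul_eq_mul, Matrix.mulVec, dotProduct]
    apply mul_nonneg (by positivity)
    exact Finset.sum_nonneg fun j _ => by
      simpa using mul_nonneg (hAinvnn i j) zero_le_one
  -- the defining equation for v
  have hAv : A *ᵥ v = fun _ => α / (n:ℝ) := by
    rw [hv, Matrix.mulVec_smul, Matrix.mulVec_mulVec, Matrix.mul_nonsing_inv _ hAdet,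
      Matrix.one_mulVec]
    funext i
    simp
  have heq : ∀ i, v i = α / (n:ℝ) + (1 - α) * ∑ j, W j i * v j := by
    intro i
    have h1 : (A *ᵥ v) i = α / (n:ℝ) := congrFun hAv i
    rw [hAdef, Matrix.sub_mulVec, Matrix.one_mulVec, Matrix.smul_mulVec] at h1
    simp only [Pi.sub_apply, Pi.smul_apply, smul_eq_mul, Matrix.mulVec, dotProduct,
      Matrix.transpose_apply] at h1
    linarith [h1]
  -- the coordinates of v sum to 1
  have hsum : ∑ i, v i = 1 := by
    have h2 : ∑ i, v i = ∑ i, (α / (n:ℝ) + (1 - α) * ∑ j, W j i * v j) :=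
      Finset.sum_congr rfl fun i _ => heq i
    rw [Finset.sum_add_distrib, Finset.sum_const, ← Finset.mul_sum, Finset.sum_comm] at h2
    have h3 : ∑ j, ∑ i, W j i * v j = ∑ j, v j := by
      apply Finset.sum_congr rfl
      intro j _
      rw [← Finset.sum_mul, hrow j, one_mul]
    rw [h3] at h2
    rw [Finset.card_univ] at h2
    have : ((Fintype.card (Fin n)) : ℝ) * (α / (n:ℝ)) = α := by
      simp [Fintype.card_fin]; field_simp
    rw [nsmul_eq_mul, this] at h2
    nlinarith [h2]
  -- final bound
  intro i
  have hkey : ∑ j, W j i * v j ≤ 1 - v i := by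
    have h4 : ∑ j, W j i * v j = ∑ j ∈ Finset.univ.erase i, W j i * v j := by
      rw [← Finset.sum_erase_add _ _ (Finset.mem_univ i), hdiag i, zero_mul, add_zero]
    have h5 : ∑ j ∈ Finset.univ.erase i, W j i * v j ≤ ∑ j ∈ Finset.univ.erase i, v j :=
      Finset.sum_le_sum fun j _ => mul_le_of_le_one_left (hv0 j) (hW1 j i)
    have h6 : ∑ j ∈ Finset.univ.erase i, v j = 1 - v i := by
      have := Finset.sum_erase_add Finset.univ v (Finset.mem_univ i)
      rw [hsum] at this
      linarith
    linarith [h4 ▸ h5, h6]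
  have hkey2 : v i ≤ α / (n:ℝ) + (1 - α) * (1 - v i) := by
    have h7 := heq i
    have h8 := mul_le_mul_of_nonneg_left hkey (by linarith : (0:ℝ) ≤ 1 - α)
    linarith
  have hfr : α * ((n:ℝ) - 1) / (n:ℝ) = α - α / (n:ℝ) := by field_simp
  rw [le_div_iff₀ (by linarith : (0:ℝ) < 2 - α)]
  nlinarith [hkey2, hfr]
end

section
/- For n ≥ 2, the matrix W with w_{1i} = 1/(n-1) for all i ≥ 2, w_{i1} = 1 for all i ≥ 2, and all other entries zero, has influence vector whose first coefficient equals (1 - α(n-1)/n)/(2-α), so the upper bound on influence vector coefficients is attained. -/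
open Matrix BigOperators

/-- The star network (`w_{1i} = 1/(n-1)`, `w_{i1} = 1` for `i ≥ 2`) attains the
maximum possible influence coefficient `(1 - α(n-1)/n)/(2-α)` at the hub. -/
theorem influence_upper_bound_attained (n : ℕ) (hn : 2 ≤ n) (α : ℝ)
    (hα0 : 0 < α) (hα1 : α < 1)
    (W : Matrix (Fin n) (Fin n) ℝ)
    (hW : ∀ i j : Fin n, W i j =
      if i.val = 0 then (if j.val = 0 then 0 else 1 / ((n : ℝ) - 1))
      else if j.val = 0 then 1 else 0) :
    influence α W ⟨0, by omega⟩ = (1 - α * ((n : ℝ) - 1) / (n : ℝ)) / (2 - α) := by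
  have hncast : (2:ℝ) ≤ (n:ℝ) := by exact_mod_cast hn
  have hn0 : (n:ℝ) ≠ 0 := by linarith
  have hn1 : (n:ℝ) - 1 ≠ 0 := by linarith
  set β : ℝ := 1 - α with hβ
  have hβ01 : 0 < β ∧ β < 1 := ⟨by linarith, by linarith⟩
  set d : ℝ := 1 - β^2 with hdd
  have hd0 : d ≠ 0 := by
    have : 0 < d := by nlinarith [hβ01.1, hβ01.2]
    linarith
  set z : Fin n := ⟨0, by omega⟩ with hz
  have hzval : ∀ k : Fin n, k = z ↔ k.val = 0 := by
    intro k; constructor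
    · intro h; rw [h]
    · intro h; exact Fin.ext h
  have hz0 : z.val = 0 := rfl
  set M : Matrix (Fin n) (Fin n) ℝ := 1 - (1 - α) • Wᵀ with hM
  set N : Matrix (Fin n) (Fin n) ℝ := fun i j =>
    if i.val = 0 then (if j.val = 0 then 1/d else β/d)
    else if j.val = 0 then β/(((n:ℝ)-1)*d)
    else (if i = j then 1 else 0) + β^2/(((n:ℝ)-1)*d) with hN
  have hMe : ∀ i k : Fin n, M i k = (if i = k then 1 else 0)
      - β * (if k.val = 0 then (if i.val = 0 then 0 else 1/((n:ℝ)-1))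
             else if i.val = 0 then 1 else 0) := by
    intro i k
    simp [hM, Matrix.one_apply, Matrix.transpose_apply, hW k i, hβ]
  have hcard : (Finset.univ.erase z).card = n - 1 := by
    rw [Finset.card_erase_of_mem (Finset.mem_univ z), Finset.card_univ, Fintype.card_fin]
  have hcardcast : ((Finset.univ.erase z).card : ℝ) = (n:ℝ) - 1 := by
    rw [hcard]; push_cast [Nat.cast_sub (by omega : 1 ≤ n)]; ring
  have hMN : M * N = 1 := by
    ext i j
    rw [Matrix.mul_apply, ← Finset.add_sum_erase _ _ (Finset.mem_univ z)]
    have hkne : ∀ k ∈ Finset.univ.erase z, ¬ k.val = 0 := by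
      intro k hk
      have := Finset.ne_of_mem_erase hk
      rw [Ne, hzval] at this; exact this
    by_cases hi : i.val = 0
    · have hiz : i = z := (hzval i).2 hi
      by_cases hj : j.val = 0
      · have hjz : j = z := (hzval j).2 hj
        have hsum : ∀ k ∈ Finset.univ.erase z, M i k * N k j = -(β * (β/(((n:ℝ)-1)*d))) := by
          intro k hk
          have hk0 := hkne k hk
          have hik : i ≠ k := by rw [hiz]; exact (Finset.ne_of_mem_erase hk).symm
          rw [hMe, hN]
          simp only [hik, hi, hk0, hj, if_true, if_false, if_neg hk0]
          ring
        rw [Finset.sum_congr rfl hsum, Finset.sum_const, nsmul_eq_mul, hcardcast]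
        rw [hMe, hN]
        simp only [hi, hj, if_true, hiz, Matrix.one_apply, hjz, if_pos rfl, hz0]
        field_simp
        ring
      · have hjz : j ≠ z := by rw [Ne, hzval]; exact hj
        have hjmem : j ∈ Finset.univ.erase z := Finset.mem_erase.2 ⟨hjz, Finset.mem_univ j⟩
        have hsum : ∀ k ∈ Finset.univ.erase z, M i k * N k j
            = -(β * ((if k = j then 1 else 0) + β^2/(((n:ℝ)-1)*d))) := by
          intro k hk
          have hk0 := hkne k hk
          have hik : i ≠ k := by rw [hiz]; exact (Finset.ne_of_mem_erase hk).symm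
          rw [hMe, hN]
          simp only [hik, hi, hk0, hj, if_true, if_false, if_neg hk0]
          ring
        rw [Finset.sum_congr rfl hsum]
        rw [Finset.sum_neg_distrib]
        simp only [mul_add, mul_ite, mul_one, mul_zero, Finset.sum_add_distrib,
          Finset.sum_ite_eq' _ j, if_pos hjmem, Finset.sum_const, nsmul_eq_mul, hcardcast]
        rw [hMe, hN]
        simp only [hi, hj, if_true, if_false, hiz, Matrix.one_apply, hz0]
        have hzj : ¬ z = j := fun h => hjz h.symm
        simp only [hzj, if_false, if_pos rfl]
        field_simp
        ring
    · have hiz : i ≠ z := by rw [Ne, hzval]; exact hi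
      have himem : i ∈ Finset.univ.erase z := Finset.mem_erase.2 ⟨hiz, Finset.mem_univ i⟩
      have hsum : ∀ k ∈ Finset.univ.erase z, M i k * N k j
          = (if i = k then 1 else 0) * N k j := by
        intro k hk
        have hk0 := hkne k hk
        rw [hMe]
        simp only [hk0, hi, if_false]
        ring
      rw [Finset.sum_congr rfl hsum]
      simp only [ite_mul, one_mul, zero_mul]
      rw [Finset.sum_ite_eq _ i (fun k => N k j), if_pos himem]
      by_cases hj : j.val = 0
      · have hjz : j = z := (hzval j).2 hj
        rw [hMe, hN]
        simp only [hi, hj, if_false, if_true, hz0]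
        have hizne : ¬ i = z := hiz
        simp only [hizne, if_false]
        have hone : (1 : Matrix (Fin n) (Fin n) ℝ) i j = 0 := by
          rw [hjz]; exact Matrix.one_apply_ne hiz
        rw [hone]
        field_simp
        ring
      · rw [hMe, hN]
        have hizne : ¬ i = z := hiz
        have hjzne : ¬ j = z := by rw [hzval]; exact hj
        simp only [hi, hj, hizne, hjzne, if_false, if_true, hz0, Ne.symm hjzne]
        have hone : (1 : Matrix (Fin n) (Fin n) ℝ) i j = if i = j then (1:ℝ) else 0 :=
          Matrix.one_apply
        rw [hone]
        by_cases hij : i = j <;> simp only [hij, if_true, if_false] <;> field_simp <;> ring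
  have hinv : M⁻¹ = N := Matrix.inv_eq_right_inv hMN
  show (α / (n : ℝ)) * ((M⁻¹ *ᵥ fun _ => 1) z) = _
  rw [hinv]
  rw [Matrix.mulVec, dotProduct]
  simp only [mul_one]
  rw [← Finset.add_sum_erase _ _ (Finset.mem_univ z)]
  have hsum : ∀ k ∈ Finset.univ.erase z, N z k = β/d := by
    intro k hk
    have hk0 : ¬ k.val = 0 := by
      have := Finset.ne_of_mem_erase hk
      rw [Ne, hzval] at this; exact this
    rw [hN]; simp only [hk0, if_false, if_true, hz0]
  rw [Finset.sum_congr rfl hsum, Finset.sum_const, nsmul_eq_mul, hcardcast]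
  rw [hN]
  simp only [if_pos rfl, hz0, if_true]
  have h2α : (2:ℝ) - α ≠ 0 := by linarith
  have hdval : d = α * (2 - α) := by rw [hdd, hβ]; ring
  rw [hdval]
  field_simp
  ring
end

section
/- Every coefficient of the influence vector v_W = (α/n)(I-(1-α)W')⁻¹𝟏 of a row-stochastic n×n matrix W is at least α/n; moreover for n ≥ 3 this bound is attained: the matrix W with w_{12} = 1, w_{i1} = 1 for all i ≥ 2, and all other entries 0 has influence vector coefficients equal to α/n for all indices i ≥ 3. -/
open Matrix BigOperators

section Aux

attribute [local instance] Matrix.linftyOpNormedRing Matrix.linftyOpNormedAlgebra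

private lemma aux_norm_lt_one {n : ℕ} {α : ℝ} (hα0 : 0 < α) (hα1 : α < 1)
    (W : Matrix (Fin n) (Fin n) ℝ) (hpos : ∀ i j, 0 ≤ W i j)
    (hrow : ∀ i, ∑ j, W i j = 1) : ‖(1 - α) • W‖ < 1 := by
  rw [← coe_nnnorm, ← NNReal.coe_one, NNReal.coe_lt_coe, Matrix.linfty_opNNNorm_def]
  refine Finset.sup_lt_iff (by norm_num) |>.2 fun i _ => ?_
  rw [← NNReal.coe_lt_coe]
  push_cast [coe_nnnorm]
  have h : ∀ j, ‖((1 - α) • W) i j‖ = (1 - α) * W i j := by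
    intro j
    rw [Matrix.smul_apply, smul_eq_mul, Real.norm_eq_abs,
      abs_of_nonneg (mul_nonneg (by linarith) (hpos i j))]
  rw [Finset.sum_congr rfl fun j _ => h j, ← Finset.mul_sum, hrow i]
  simp only [mul_one, NNReal.coe_one]
  linarith

private lemma aux_inv_nonneg {n : ℕ} (t : Matrix (Fin n) (Fin n) ℝ) (ht : ‖t‖ < 1)
    (htn : ∀ i j, 0 ≤ t i j) : ∀ i j, 0 ≤ (1 - t)⁻¹ i j := by
  intro i j
  have hinv : (1 - t)⁻¹ = ∑' k : ℕ, t ^ k :=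
    Matrix.inv_eq_left_inv (geom_series_mul_neg t ht)
  have hs : Summable (fun k : ℕ => t ^ k) := summable_geometric_of_norm_lt_one ht
  let L : Matrix (Fin n) (Fin n) ℝ →ₗ[ℝ] ℝ :=
    { toFun := fun A => A i j, map_add' := fun _ _ => rfl, map_smul' := fun _ _ => rfl }
  have hLc : Continuous L := L.continuous_of_finiteDimensional
  have hmap : L (∑' k : ℕ, t ^ k) = ∑' k : ℕ, L (t ^ k) :=
    hs.hasSum.map L.toAddMonoidHom hLc |>.tsum_eq.symm
  have hpow : ∀ (k : ℕ) (a b : Fin n), 0 ≤ (t ^ k) a b := by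
    intro k
    induction k with
    | zero => intro a b; by_cases h : a = b <;> simp [pow_zero, Matrix.one_apply, h]
    | succ k ih =>
      intro a b
      rw [pow_succ, Matrix.mul_apply]
      exact Finset.sum_nonneg fun c _ => mul_nonneg (ih a c) (htn c b)
  have h0 : (0:ℝ) ≤ L (∑' k : ℕ, t ^ k) := by
    rw [hmap]; exact tsum_nonneg fun k => hpow k i j
  rw [hinv]; exact h0

private lemma aux_main {n : ℕ} {α : ℝ} (hα0 : 0 < α) (hα1 : α < 1)
    (W : Matrix (Fin n) (Fin n) ℝ) (hpos : ∀ i j, 0 ≤ W i j)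
    (hrow : ∀ i, ∑ j, W i j = 1) :
    IsUnit (1 - (1 - α) • Wᵀ).det ∧ (∀ i j, 0 ≤ (1 - (1 - α) • Wᵀ)⁻¹ i j) := by
  set t : Matrix (Fin n) (Fin n) ℝ := (1 - α) • W with htdef
  have ht : ‖t‖ < 1 := aux_norm_lt_one hα0 hα1 W hpos hrow
  have htr : (1 - (1 - α) • Wᵀ) = (1 - t)ᵀ := by
    rw [Matrix.transpose_sub, Matrix.transpose_one, htdef, Matrix.transpose_smul]
  have hU : IsUnit (1 - t) := isUnit_one_sub_of_norm_lt_one ht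
  have hdet : IsUnit (1 - t).det := (Matrix.isUnit_iff_isUnit_det _).1 hU
  constructor
  · rw [htr, Matrix.det_transpose]; exact hdet
  · intro i j
    rw [htr, ← Matrix.transpose_nonsing_inv, Matrix.transpose_apply]
    exact aux_inv_nonneg t ht (fun a b => mul_nonneg (by linarith) (hpos a b)) j i

end Aux

/-- Every coefficient of the influence vector of a row-stochastic matrix with zero
diagonal is at least `α/n`; moreover for `n ≥ 3` this is attained for the network
with `w_{12} = 1` and `w_{i1} = 1` for `i ≥ 2` at every index `i ≥ 3`. -/
theorem influence_coefficient_lower_bound (n : ℕ) (hn : 3 ≤ n) (α : ℝ)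
    (hα0 : 0 < α) (hα1 : α < 1) :
    (∀ W : Matrix (Fin n) (Fin n) ℝ, (∀ i j, 0 ≤ W i j) → (∀ i, ∑ j, W i j = 1) →
      (∀ i, W i i = 0) → ∀ i, α / (n : ℝ) ≤ influence α W i) ∧
    (∀ W : Matrix (Fin n) (Fin n) ℝ,
      (∀ i j : Fin n, W i j =
        if i.val = 0 then (if j.val = 1 then 1 else 0)
        else if j.val = 0 then 1 else 0) →
      ∀ i : Fin n, 2 ≤ i.val → influence α W i = α / (n : ℝ)) := by
  have hnR : (3:ℝ) ≤ (n:ℝ) := by exact_mod_cast hn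
  have hαn : 0 < α / (n:ℝ) := div_pos hα0 (by linarith)
  constructor
  · -- part 1
    intro W hpos hrow _ i
    obtain ⟨hdet, hnn⟩ := aux_main hα0 hα1 W hpos hrow
    set M : Matrix (Fin n) (Fin n) ℝ := 1 - (1 - α) • Wᵀ with hMdef
    have hMM : M * M⁻¹ = 1 := Matrix.mul_nonsing_inv M hdet
    have hsplit : M⁻¹ = 1 + ((1 - α) • Wᵀ) * M⁻¹ := by
      have h1 : M⁻¹ - ((1 - α) • Wᵀ) * M⁻¹ = 1 := by
        rw [hMdef] at hMM; rwa [Matrix.sub_mul, Matrix.one_mul] at hMM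
      exact sub_eq_iff_eq_add.mp h1
    have hdiag : (1:ℝ) ≤ M⁻¹ i i := by
      have h2 : M⁻¹ i i = 1 + (((1 - α) • Wᵀ) * M⁻¹) i i := by
        conv_lhs => rw [hsplit]
        rw [Matrix.add_apply, Matrix.one_apply_eq]
      rw [h2]
      have h3 : 0 ≤ (((1 - α) • Wᵀ) * M⁻¹) i i := by
        rw [Matrix.mul_apply]
        refine Finset.sum_nonneg fun k _ => mul_nonneg ?_ (hnn k i)
        rw [Matrix.smul_apply, Matrix.transpose_apply, smul_eq_mul]
        exact mul_nonneg (by linarith) (hpos k i)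
      linarith
    have hsum : (1:ℝ) ≤ ∑ j, M⁻¹ i j * 1 := by
      simp only [mul_one]
      calc (1:ℝ) ≤ M⁻¹ i i := hdiag
        _ ≤ ∑ j, M⁻¹ i j :=
          Finset.single_le_sum (fun j _ => hnn i j) (Finset.mem_univ i)
    have : influence α W i = (α / n) * ∑ j, M⁻¹ i j * 1 := by
      simp [influence, Matrix.mulVec, dotProduct, hMdef]
    rw [this]
    nlinarith
  · -- part 2
    intro W hW i hi
    have hpos : ∀ a b, 0 ≤ W a b := by
      intro a b; rw [hW]; split_ifs <;> norm_num
    set e0 : Fin n := ⟨0, by omega⟩ with he0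
    set e1 : Fin n := ⟨1, by omega⟩ with he1
    have hrow : ∀ a, ∑ b, W a b = 1 := by
      intro a
      by_cases h : a.val = 0
      · have : ∀ b : Fin n, W a b = if b = e1 then 1 else 0 := by
          intro b; rw [hW]; simp only [h, if_true]
          congr 1
          simp [Fin.ext_iff, he1]
        simp [this]
      · have : ∀ b : Fin n, W a b = if b = e0 then 1 else 0 := by
          intro b; rw [hW]; simp only [h, if_false, if_neg h]
          congr 1
          simp [Fin.ext_iff, he0]
        simp [this]
    obtain ⟨hdet, _⟩ := aux_main hα0 hα1 W hpos hrow
    set β : ℝ := 1 - α with hβ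
    have hβ0 : 0 ≤ β := by rw [hβ]; linarith
    have hβ1 : β < 1 := by rw [hβ]; linarith
    have hden : 1 - β^2 ≠ 0 := by nlinarith
    set c0 : ℝ := (1 + β * ((n:ℝ) - 1)) / (1 - β^2) with hc0
    set c1 : ℝ := 1 + β * c0 with hc1
    set u : Fin n → ℝ := fun j => if j.val = 0 then c0 else if j.val = 1 then c1 else 1 with hu
    set M : Matrix (Fin n) (Fin n) ℝ := 1 - (1 - α) • Wᵀ with hMdef
    -- the column sums
    have key : ∀ i0 : Fin n, ∑ j, W j i0 * u j =
        if i0.val = 0 then c1 + ((n:ℝ) - 2) else if i0.val = 1 then c0 else 0 := by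
      intro i0
      have hterm : ∀ j : Fin n, W j i0 * u j =
          if i0.val = 0 then (if j.val = 0 then 0 else if j.val = 1 then c1 else 1)
          else if i0.val = 1 then (if j.val = 0 then c0 else 0) else 0 := by
        intro j
        rw [hW, hu]
        by_cases h0 : i0.val = 0 <;> by_cases h1 : i0.val = 1 <;>
          by_cases hj0 : j.val = 0 <;> by_cases hj1 : j.val = 1 <;>
          simp [h0, h1, hj0, hj1] <;> omega
      rw [Finset.sum_congr rfl fun j _ => hterm j]
      by_cases h0 : i0.val = 0
      · simp only [h0, if_true]
        have hc : ∀ k : ℕ, (if k = 0 then (0:ℝ) else if k = 1 then c1 else 1)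
            = 1 + (if k = 0 then (0:ℝ) - 1 else 0) + (if k = 1 then c1 - 1 else 0) := by
          intro k; rcases k with _|_|k <;> simp
        rw [Fin.sum_univ_eq_sum_range (fun k => if k = 0 then (0:ℝ) else if k = 1 then c1 else 1)]
        simp_rw [hc]
        rw [Finset.sum_add_distrib, Finset.sum_add_distrib, Finset.sum_const,
          Finset.sum_ite_eq' (Finset.range n) 0 (fun _ => (0:ℝ) - 1),
          Finset.sum_ite_eq' (Finset.range n) 1 (fun _ => c1 - 1)]
        have m0 : (0:ℕ) ∈ Finset.range n := Finset.mem_range.2 (by omega)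
        have m1 : (1:ℕ) ∈ Finset.range n := Finset.mem_range.2 (by omega)
        rw [if_pos m0, if_pos m1, Finset.card_range, nsmul_eq_mul]
        ring
      · by_cases h1 : i0.val = 1
        · simp only [h0, if_false, h1, if_true]
          have : ∀ j : Fin n, (if j.val = 0 then c0 else (0:ℝ)) = if j = e0 then c0 else 0 := by
            intro j; congr 1; simp [Fin.ext_iff, he0]
          simp [this]
        · simp [h0, h1]
    -- M *ᵥ u = 1
    have hMu : M *ᵥ u = (fun _ => (1:ℝ)) := by
      funext i0
      have hexp : (M *ᵥ u) i0 = u i0 - β * ∑ j, W j i0 * u j := by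
        rw [hMdef]
        simp only [Matrix.mulVec, dotProduct, Matrix.sub_apply, Matrix.smul_apply,
          Matrix.transpose_apply, Matrix.one_apply, smul_eq_mul, sub_mul,
          Finset.sum_sub_distrib, ite_mul, one_mul, zero_mul]
        rw [Finset.sum_ite_eq Finset.univ i0 u, if_pos (Finset.mem_univ i0)]
        have hx : ∑ x : Fin n, α * W x i0 * u x = α * ∑ x : Fin n, W x i0 * u x := by
          rw [Finset.mul_sum]
          exact Finset.sum_congr rfl fun _ _ => by ring
        rw [hx, hβ]
        ring
      rw [hexp, key i0]
      by_cases h0 : i0.val = 0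
      · rw [if_pos h0]
        have hui : u i0 = c0 := by rw [hu]; simp [h0]
        rw [hui, hc1, hc0]
        field_simp
        ring
      · by_cases h1 : i0.val = 1
        · rw [if_neg h0, if_pos h1]
          have hui : u i0 = c1 := by rw [hu]; simp [h0, h1]
          rw [hui, hc1]; ring
        · rw [if_neg h0, if_neg h1]
          have hui : u i0 = 1 := by rw [hu]; simp [h0, h1]
          rw [hui]; ring
    -- conclude
    have hinv : M⁻¹ *ᵥ (fun _ => (1:ℝ)) = u := by
      rw [← hMu, Matrix.mulVec_mulVec, Matrix.nonsing_inv_mul M hdet, Matrix.one_mulVec]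
    have h0 : ¬ i.val = 0 := by omega
    have h1 : ¬ i.val = 1 := by omega
    rw [influence, ← hMdef, hinv, Pi.smul_apply, smul_eq_mul]
    have hui : u i = 1 := by rw [hu]; simp [h0, h1]
    rw [hui, mul_one]
end

section
/- Consider the network J on n > 3 vertices with connectivity matrix X given by x_{1j} = 1/(n-1) for j > 1, x_{i(i-1)} = 1 for i > 1, and all other entries zero. Its influence vector (p₁,…,p_n) satisfies p_{n-i} = (1/α - (1-α)^{i+1}/α)·p_n for 0 ≤ i < n-1, and p_n = (1 - α/n)α² / (-α² + (1-α)^{n+1} + αn + α - 1). -/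
open Matrix BigOperators

set_option maxHeartbeats 1000000 in
/-- For the chain-with-hub network `J` (`x_{1j} = 1/(n-1)` for `j > 1` and
`x_{i,i-1} = 1` for `i > 1`), the influence vector satisfies
`p_{n-i} = (1/α - (1-α)^{i+1}/α)·p_n` for `0 ≤ i < n-1` and
`p_n = (1 - α/n)α² / (-α² + (1-α)^{n+1} + αn + α - 1)`. -/
theorem influence_chain_hub (n : ℕ) (hn : 3 < n) (α : ℝ) (hα0 : 0 < α) (hα1 : α < 1)
    (X : Matrix (Fin n) (Fin n) ℝ)
    (hX : ∀ i j : Fin n, X i j =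
      if i.val = 0 then (if j.val = 0 then 0 else 1 / ((n : ℝ) - 1))
      else if j.val + 1 = i.val then 1 else 0) :
    (∀ i : ℕ, i < n - 1 →
      influence α X ⟨n - 1 - i, by omega⟩ =
        (1 / α - (1 - α) ^ (i + 1) / α) * influence α X ⟨n - 1, by omega⟩) ∧
    influence α X ⟨n - 1, by omega⟩ =
      (1 - α / (n : ℝ)) * α ^ 2 /
        (-α ^ 2 + (1 - α) ^ (n + 1) + α * (n : ℝ) + α - 1) := by
  have hαne : α ≠ 0 := ne_of_gt hα0
  haveI : NeZero n := ⟨by omega⟩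
  set β : ℝ := 1 - α with hβdef
  have hβ0 : 0 < β := by rw [hβdef]; linarith
  have hβ1 : β < 1 := by rw [hβdef]; linarith
  have hnR : (3:ℝ) < (n:ℝ) := by exact_mod_cast hn
  have hn0 : (n:ℝ) ≠ 0 := by linarith
  have hn1 : ((n:ℝ) - 1) ≠ 0 := by linarith
  have hn1pos : (0:ℝ) < (n:ℝ) - 1 := by linarith
  -- the denominator
  set D : ℝ := -α ^ 2 + β ^ (n + 1) + α * (n : ℝ) + α - 1 with hDdef
  have hDalt : D = α * ((n:ℝ) - 1) - β ^ 2 * (1 - β ^ (n - 1)) := by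
    rw [hDdef, show n + 1 = 2 + (n - 1) by omega, pow_add, hβdef]; ring
  have hber : 1 - β ^ (n - 1) ≤ ((n:ℝ) - 1) * α := by
    have hc : ((n - 1 : ℕ) : ℝ) = (n:ℝ) - 1 := by
      have := Nat.cast_sub (R := ℝ) (show 1 ≤ n by omega); simpa using this
    have h := one_add_mul_le_pow (show (-2:ℝ) ≤ β - 1 by linarith) (n - 1)
    rw [show (1:ℝ) + (β - 1) = β by ring, hc] at h
    nlinarith [h]
  have hD : 0 < D := by
    rw [hDalt]
    nlinarith [mul_le_mul_of_nonneg_left hber (sq_nonneg β), sq_nonneg β,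
      mul_pos (mul_pos hα0 hn1pos) (show (0:ℝ) < 1 - β ^ 2 by nlinarith),
      pow_le_one₀ (le_of_lt hβ0) (le_of_lt hβ1) (n := n - 1)]
  have hDne : D ≠ 0 := ne_of_gt hD
  have hDne' : α * ((n:ℝ) - 1) - β ^ 2 * (1 - β ^ (n - 1)) ≠ 0 := by
    rw [← hDalt]; exact hDne
  have hDne2 : α * ((n:ℝ) - 1) - (1 - α) ^ 2 * (1 - (1 - α) ^ (n - 1)) ≠ 0 := by
    rw [← hβdef]; exact hDne'
  -- the candidate solution
  set pn : ℝ := (1 - α / (n:ℝ)) * α ^ 2 / D with hpn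
  set q : Fin n → ℝ := fun k =>
    if k.val = 0 then α / (n:ℝ) + β * (1 - β ^ (n - 1)) / α * pn
    else (1 - β ^ (n - k.val)) / α * pn with hq
  have hq0 : q 0 = α / (n:ℝ) + β * (1 - β ^ (n - 1)) / α * pn := by
    simp [hq]
  have hqk : ∀ k : Fin n, k.val ≠ 0 → q k = (1 - β ^ (n - k.val)) / α * pn := by
    intro k hk; simp only [hq]; exact if_neg hk
  -- the key scalar identity defining pn
  have hkey : β * q 0 / ((n:ℝ) - 1) = pn - α / (n:ℝ) := by
    rw [hq0, hpn, hDalt]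
    field_simp
    ring
  -- the matrix
  set M : Matrix (Fin n) (Fin n) ℝ := 1 - β • Xᵀ with hM
  -- the sum appearing in M *ᵥ u
  have hsum : ∀ (u : Fin n → ℝ) (k : Fin n), (∑ j, X j k * u j) =
      (if k.val = 0 then 0 else u 0 / ((n:ℝ) - 1)) +
      (if h : k.val + 1 < n then u ⟨k.val + 1, h⟩ else 0) := by
    intro u k
    have hterm : ∀ j : Fin n, X j k * u j =
        (if j = 0 then (if k.val = 0 then 0 else u 0 / ((n:ℝ) - 1)) else 0) +
        (if k.val + 1 = j.val then u j else 0) := by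
      intro j
      rw [hX]
      by_cases hj : j = 0
      · subst hj
        simp only [Fin.val_zero]
        simp only [Nat.add_one_ne_zero, if_false]
        split_ifs with h <;> ring
      · have hjv : j.val ≠ 0 := by
          intro h; exact hj (Fin.ext (by simp [h]))
        rw [if_neg hjv, if_neg hj]
        split_ifs with h <;> ring
    rw [Finset.sum_congr rfl fun j _ => hterm j, Finset.sum_add_distrib]
    congr 1
    · rw [Finset.sum_ite_eq' Finset.univ (0 : Fin n)]
      simp
    · by_cases h : k.val + 1 < n
      · rw [dif_pos h]
        have hiff : ∀ j : Fin n, (k.val + 1 = j.val) ↔ (j = ⟨k.val + 1, h⟩) := by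
          intro j; constructor
          · intro hh; exact Fin.ext hh.symm
          · intro hh; rw [hh]
        simp only [hiff]
        rw [Finset.sum_ite_eq' Finset.univ (⟨k.val + 1, h⟩ : Fin n)]
        simp
      · rw [dif_neg h]
        apply Finset.sum_eq_zero
        intro j _
        rw [if_neg]
        intro hh
        exact h (hh ▸ j.isLt)
  -- the pointwise formula for M *ᵥ u
  have hmul : ∀ (u : Fin n → ℝ) (k : Fin n), (M *ᵥ u) k =
      u k - β * ((if k.val = 0 then 0 else u 0 / ((n:ℝ) - 1)) +
      (if h : k.val + 1 < n then u ⟨k.val + 1, h⟩ else 0)) := by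
    intro u k
    rw [hM, Matrix.sub_mulVec, Matrix.smul_mulVec]
    simp only [Pi.sub_apply, Pi.smul_apply, smul_eq_mul, Matrix.one_mulVec]
    rw [← hsum u k]
    have hXt : (Xᵀ *ᵥ u) k = ∑ j, X j k * u j := by
      simp [Matrix.mulVec, dotProduct, Matrix.transpose_apply]
    rw [hXt]
  -- kernel of M is trivial
  have hker : ∀ u : Fin n → ℝ, M *ᵥ u = 0 → u = 0 := by
    intro u hu
    have he : ∀ k : Fin n, u k =
        β * ((if k.val = 0 then 0 else u 0 / ((n:ℝ) - 1)) +
        (if h : k.val + 1 < n then u ⟨k.val + 1, h⟩ else 0)) := by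
      intro k
      have h := congrFun hu k
      rw [hmul] at h
      simp only [Pi.zero_apply] at h
      linarith [h]
    have hstep : ∀ i : ℕ, i ≤ n - 2 → ∀ k : Fin n, k.val = n - 1 - i →
        u k = u 0 / ((n:ℝ) - 1) * (β * (1 - β ^ (i + 1)) / α) := by
      intro i
      induction i with
      | zero =>
        intro _ k hk
        have hk0 : k.val ≠ 0 := by omega
        have hk1 : ¬ (k.val + 1 < n) := by omega
        have h := he k
        rw [if_neg hk0, dif_neg hk1] at h
        rw [h, pow_one, hβdef]
        field_simp
        ring
      | succ i ih =>
        intro hi k hk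
        have hk0 : k.val ≠ 0 := by omega
        have hk1 : k.val + 1 < n := by omega
        have h := he k
        rw [if_neg hk0, dif_pos hk1] at h
        rw [ih (by omega) ⟨k.val + 1, hk1⟩ (by simp; omega)] at h
        rw [h, hβdef]
        field_simp
        ring
    have h0 : ∀ k1 : Fin n, k1.val = 1 → u 0 = β * u k1 := by
      intro k1 hk1v
      have h := he 0
      have hv0 : (0:Fin n).val = 0 := Fin.val_zero n
      have h1n : (0:Fin n).val + 1 < n := by omega
      rw [dif_pos h1n, if_pos hv0] at h
      have hke : (⟨(0:Fin n).val + 1, h1n⟩ : Fin n) = k1 := Fin.ext (by simp [hk1v])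
      rw [h, hke, zero_add]
    have h1 : ∀ k1 : Fin n, k1.val = 1 →
        u k1 = u 0 / ((n:ℝ) - 1) * (β * (1 - β ^ (n - 1)) / α) := by
      intro k1 hk1v
      have h := hstep (n - 2) le_rfl k1 (by omega)
      rwa [show n - 2 + 1 = n - 1 by omega] at h
    have hu0 : u 0 = 0 := by
      have hk1 : (⟨1, by omega⟩ : Fin n).val = 1 := rfl
      have ha := h0 ⟨1, by omega⟩ hk1
      have hb := h1 ⟨1, by omega⟩ hk1
      rw [hb] at ha
      have h2 : u 0 * (α * ((n:ℝ) - 1) - β ^ 2 * (1 - β ^ (n - 1))) = 0 := by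
        field_simp at ha
        linear_combination ha
      rcases mul_eq_zero.mp h2 with h | h
      · exact h
      · exact absurd h hDne'
    funext k
    by_cases hk : k.val = 0
    · have hke : k = 0 := Fin.ext (by simp [hk])
      rw [hke, hu0]; rfl
    · have h := hstep (n - 1 - k.val) (by omega) k (by omega)
      rw [h, hu0]
      simp
  -- M is invertible
  have hdet : IsUnit M.det := by
    rw [← Matrix.isUnit_iff_isUnit_det]
    rw [← Matrix.mulVec_injective_iff_isUnit]
    intro u v huv
    have h : M *ᵥ (u - v) = 0 := by
      rw [Matrix.mulVec_sub, huv, sub_self]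
    exact sub_eq_zero.mp (hker _ h)
  -- M *ᵥ q = (α/n) • 1
  have heq : M *ᵥ q = fun _ => α / (n:ℝ) := by
    funext k
    show (M *ᵥ q) k = α / (n:ℝ)
    rw [hmul]
    by_cases hk0 : k.val = 0
    · have hke : k = 0 := Fin.ext (by simp [hk0])
      subst hke
      have hv0 : (0:Fin n).val = 0 := Fin.val_zero n
      have h1n : (0:Fin n).val + 1 < n := by omega
      rw [if_pos hv0, dif_pos h1n]
      rw [hqk ⟨(0:Fin n).val + 1, h1n⟩ (by simp)]
      rw [show ((⟨(0:Fin n).val + 1, h1n⟩ : Fin n)).val = 1 by simp]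
      rw [hq0]
      ring
    · rw [if_neg hk0]
      by_cases hk1 : k.val + 1 < n
      · -- middle rows
        rw [dif_pos hk1]
        rw [hqk k hk0, hqk ⟨k.val + 1, hk1⟩ (by simp)]
        rw [show ((⟨k.val + 1, hk1⟩ : Fin n)).val = k.val + 1 from rfl]
        rw [show n - k.val = (n - (k.val + 1)) + 1 by omega, pow_succ]
        rw [hq0, hpn, hDalt, hβdef]
        field_simp
        ring
      · -- last row
        have hkv : k.val = n - 1 := by omega
        rw [dif_neg hk1, hqk k hk0, hkv, show n - (n - 1) = 1 by omega, pow_one]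
        rw [hq0, hpn, hDalt, hβdef]
        field_simp
        ring
  -- influence equals q
  have hinf : influence α X = q := by
    have hMq : M *ᵥ (((n:ℝ) / α) • q) = fun _ => 1 := by
      rw [Matrix.mulVec_smul, heq]
      funext k
      simp only [Pi.smul_apply, smul_eq_mul]
      field_simp
    have hqinv : M⁻¹ *ᵥ (fun _ => (1:ℝ)) = ((n:ℝ) / α) • q := by
      rw [← hMq, Matrix.mulVec_mulVec, Matrix.nonsing_inv_mul M hdet, Matrix.one_mulVec]
    unfold influence
    rw [← hβdef, ← hM, hqinv, smul_smul, show (α / (n:ℝ)) * ((n:ℝ) / α) = 1 by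
      field_simp, one_smul]
  rw [hinf]
  refine ⟨?_, ?_⟩
  · intro i hi
    have hi0 : (⟨n - 1 - i, by omega⟩ : Fin n).val ≠ 0 := by simp; omega
    have hl0 : (⟨n - 1, by omega⟩ : Fin n).val ≠ 0 := by simp; omega
    rw [hqk _ hi0, hqk _ hl0]
    rw [show n - ((⟨n - 1 - i, by omega⟩ : Fin n)).val = i + 1 by simp; omega]
    rw [show n - ((⟨n - 1, by omega⟩ : Fin n)).val = 1 by simp; omega]
    rw [pow_one]
    have hβα : (1:ℝ) - β = α := by rw [hβdef]; ring
    rw [hβα]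
    field_simp
  · have hl0 : (⟨n - 1, by omega⟩ : Fin n).val ≠ 0 := by simp; omega
    rw [hqk _ hl0]
    rw [show n - ((⟨n - 1, by omega⟩ : Fin n)).val = 1 by simp; omega]
    rw [pow_one]
    have hβα : (1:ℝ) - β = α := by rw [hβdef]; ring
    rw [hβα]
    rw [hpn, hDdef]
    field_simp
end

section
/- For the cycle-with-hub network J of the previous statement, every coefficient of the influence vector lies in the interval [α/n, 1/(αn)]. -/
open Matrix BigOperators

set_option maxHeartbeats 1000000 in
/-- For the chain-with-hub network `J`, every coefficient of the influence vector
lies in the interval `[α/n, 1/(αn)]`. -/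
theorem influence_chain_hub_bounds (n : ℕ) (hn : 3 < n) (α : ℝ) (hα0 : 0 < α) (hα1 : α < 1)
    (X : Matrix (Fin n) (Fin n) ℝ)
    (hX : ∀ i j : Fin n, X i j =
      if i.val = 0 then (if j.val = 0 then 0 else 1 / ((n : ℝ) - 1))
      else if j.val + 1 = i.val then 1 else 0) :
    ∀ i, influence α X i ∈ Set.Icc (α / (n : ℝ)) (1 / (α * (n : ℝ))) := by
  have hN : (4:ℝ) ≤ (n:ℝ) := by exact_mod_cast hn
  have hN0 : (0:ℝ) < (n:ℝ) := by linarith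
  have hN1 : (0:ℝ) < (n:ℝ) - 1 := by linarith
  have hb0 : (0:ℝ) < 1 - α := by linarith
  have hb1 : (1:ℝ) - α < 1 := by linarith
  -- key power facts
  set c : ℝ := (1-α)^(n-1) with hc
  have hc0 : 0 < c := pow_pos hb0 _
  have hc1 : c ≤ 1 := pow_le_one₀ hb0.le hb1.le
  have hcB : 1 - ((n:ℝ)-1)*α ≤ c := by
    have := one_add_mul_le_pow (show (-2:ℝ) ≤ -α by linarith) (n-1)
    rw [show (1:ℝ) + -α = 1 - α by ring] at this
    have hcast : ((n-1 : ℕ) : ℝ) = (n:ℝ) - 1 := by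
      push_cast [Nat.cast_sub (by omega : 1 ≤ n)]; ring
    rw [hcast] at this
    calc 1 - ((n:ℝ)-1)*α = 1 + ((n:ℝ)-1) * (-α) := by ring
    _ ≤ (1 - α)^(n-1) := this
    _ = c := hc.symm
  have hbn : (1-α)^n = c*(1-α) := by
    rw [hc, ← pow_succ]; congr 1; omega
  have hbn1 : (1-α)^(n+1) = c*(1-α)^2 := by
    rw [hc, ← pow_add]; congr 1; omega
  -- the denominator
  set D : ℝ := α*((n:ℝ)-1) - (1-α)^2 + (1-α)^(n+1) with hD
  have hD0 : 0 < D := by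
    rw [hD, hbn1]
    nlinarith [mul_le_mul_of_nonneg_left hcB (sq_nonneg (1-α)), sq_nonneg (1-α),
      mul_pos hα0 hN1, sq_nonneg α]
  -- the candidate solution
  set q : Fin n → ℝ := fun j => if j.val = 0 then ((n:ℝ)-1)*(1-(1-α)^n)/D
    else ((n:ℝ)-1+(1-α))*(1-(1-α)^(n-j.val))/D with hq
  set M : Matrix (Fin n) (Fin n) ℝ := 1 - (1-α) • Xᵀ with hM
  have z : Fin n := ⟨0, by omega⟩
  -- row sums of X are 1 and diagonal is 0
  have hXnn : ∀ i j, 0 ≤ X i j := by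
    intro i j; rw [hX]; split_ifs <;> positivity
  have hdiag : ∀ k, X k k = 0 := by
    intro k; rw [hX]; split_ifs with h1 h2 h3 <;> first | rfl | omega
  have hrow : ∀ k, ∑ j, X k j = 1 := by
    intro k
    by_cases hk : k.val = 0
    · have hpt : ∀ j : Fin n, X k j =
          1/((n:ℝ)-1) - (if j = (⟨0, by omega⟩ : Fin n) then 1/((n:ℝ)-1) else 0) := by
        intro j
        rw [hX, if_pos hk]
        by_cases hj : j.val = 0
        · rw [if_pos hj, if_pos (Fin.ext hj)]; ring
        · rw [if_neg hj, if_neg (by intro h; exact hj (by rw [h])), sub_zero]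
      rw [Finset.sum_congr rfl (fun j _ => hpt j), Finset.sum_sub_distrib, Finset.sum_const,
        Finset.card_univ, Fintype.card_fin, Finset.sum_ite_eq' Finset.univ,
        if_pos (Finset.mem_univ _)]
      rw [nsmul_eq_mul, ← sub_one_mul, mul_one_div_cancel hN1.ne']
    · have hk1 : k.val - 1 < n := by omega
      have hpt : ∀ j : Fin n, X k j = (if j = (⟨k.val-1, hk1⟩ : Fin n) then 1 else 0) := by
        intro j
        rw [hX, if_neg (by intro h; exact hk h)]
        by_cases hj : j.val + 1 = k.val
        · rw [if_pos hj, if_pos (Fin.ext (show j.val = k.val - 1 by omega))]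
        · rw [if_neg hj, if_neg (by
            intro h
            have hv : j.val = k.val - 1 := congrArg Fin.val h
            omega)]
      rw [Finset.sum_congr rfl (fun j _ => hpt j), Finset.sum_ite_eq' Finset.univ,
        if_pos (Finset.mem_univ _)]
  -- M is invertible
  have hdet : M.det ≠ 0 := by
    apply det_ne_zero_of_sum_col_lt_diag
    intro k
    have h1 : ∀ i ∈ Finset.univ.erase k, ‖M i k‖ = (1-α) * X k i := by
      intro i hi
      have hik : i ≠ k := (Finset.mem_erase.mp hi).1
      rw [hM]
      simp only [Matrix.sub_apply, Matrix.one_apply, Matrix.smul_apply, Matrix.transpose_apply,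
        if_neg hik, smul_eq_mul]
      rw [Real.norm_eq_abs, abs_of_nonpos (by nlinarith [hXnn k i]), neg_sub, sub_zero]
    have h2 : ‖M k k‖ = 1 := by
      rw [hM]
      simp only [Matrix.sub_apply, Matrix.one_apply, Matrix.smul_apply, Matrix.transpose_apply,
        if_pos rfl, smul_eq_mul, hdiag k, mul_zero, sub_zero]
      norm_num
    rw [h2, Finset.sum_congr rfl h1, ← Finset.mul_sum]
    rw [Finset.sum_erase_eq_sub (Finset.mem_univ k), hrow k, hdiag k, sub_zero, mul_one]
    linarith
  -- M *ᵥ q = 1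
  have hexp : ∀ i, (M *ᵥ q) i = q i - (1-α) * ∑ j, X j i * q j := by
    intro i
    rw [hM, Matrix.sub_mulVec, Matrix.one_mulVec, Matrix.smul_mulVec]
    simp [Matrix.mulVec, dotProduct, Matrix.transpose_apply]
  have hMq : M *ᵥ q = fun _ => 1 := by
    funext i
    rw [hexp i]
    by_cases hi0 : i.val = 0
    · -- hub row
      have h1n : 1 < n := by omega
      have hpt : ∀ j : Fin n, X j i * q j =
          (if j = (⟨1, h1n⟩ : Fin n) then q ⟨1, h1n⟩ else 0) := by
        intro j
        rw [hX]
        by_cases hj0 : j.val = 0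
        · rw [if_pos hj0, if_pos hi0,
            if_neg (by intro h; have hv : j.val = 1 := congrArg Fin.val h; omega)]
          ring
        · rw [if_neg hj0]
          by_cases hj1 : i.val + 1 = j.val
          · have hj : j = ⟨1, h1n⟩ := Fin.ext (show j.val = 1 by omega)
            rw [if_pos hj1, if_pos hj, hj, one_mul]
          · rw [if_neg hj1,
              if_neg (by intro h; have hv : j.val = 1 := congrArg Fin.val h; omega)]
            ring
      rw [Finset.sum_congr rfl (fun j _ => hpt j), Finset.sum_ite_eq' Finset.univ,
        if_pos (Finset.mem_univ _)]
      have e1 : q i = ((n:ℝ)-1)*(1-(1-α)^n)/D := by rw [hq]; simp [hi0]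
      have e2 : q ⟨1, h1n⟩ = ((n:ℝ)-1+(1-α))*(1-(1-α)^(n-1))/D := by rw [hq]; simp
      rw [e1, e2, hbn, ← hc]
      field_simp
      rw [hD, hbn1]
      ring
    · have hz : (0:ℕ) < n := by omega
      have hqz : q ⟨0, hz⟩ = ((n:ℝ)-1)*(1-(1-α)^n)/D := by rw [hq]; simp
      have ei : q i = ((n:ℝ)-1+(1-α))*(1-(1-α)^(n-i.val))/D := by rw [hq]; simp [hi0]
      by_cases hin : i.val = n - 1
      · -- last row
        have hpt : ∀ j : Fin n, X j i * q j =
            (if j = (⟨0, hz⟩ : Fin n) then (1/((n:ℝ)-1)) * q ⟨0, hz⟩ else 0) := by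
          intro j
          rw [hX]
          by_cases hj0 : j.val = 0
          · rw [if_pos hj0, if_neg hi0,
              if_pos (show j = ⟨0, hz⟩ from Fin.ext hj0),
              show j = ⟨0, hz⟩ from Fin.ext hj0]
          · rw [if_neg hj0, if_neg (show ¬ i.val + 1 = j.val by omega),
              if_neg (by intro h; have hv : j.val = 0 := congrArg Fin.val h; omega)]
            ring
        rw [Finset.sum_congr rfl (fun j _ => hpt j), Finset.sum_ite_eq' Finset.univ,
          if_pos (Finset.mem_univ _)]
        rw [ei, hqz, hbn, show n - i.val = 1 by omega, pow_one]
        field_simp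
        rw [hD, hbn1]
        ring
      · -- middle rows
        have hsi : i.val + 1 < n := by omega
        have hne : (⟨0, hz⟩ : Fin n) ≠ (⟨i.val+1, hsi⟩ : Fin n) := by
          intro h; have := congrArg Fin.val h; simp only [] at this; omega
        have hpt : ∀ j : Fin n, X j i * q j =
            (if j = (⟨0, hz⟩ : Fin n) then (1/((n:ℝ)-1)) * q ⟨0, hz⟩ else 0)
            + (if j = (⟨i.val+1, hsi⟩ : Fin n) then q ⟨i.val+1, hsi⟩ else 0) := by
          intro j
          rw [hX]
          by_cases hj0 : j.val = 0
          · rw [if_pos hj0, if_neg hi0,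
              if_pos (show j = ⟨0, hz⟩ from Fin.ext hj0),
              show j = ⟨0, hz⟩ from Fin.ext hj0,
              if_neg (by intro h; have hv : (0:ℕ) = i.val + 1 := congrArg Fin.val h; omega)]
            ring
          · rw [if_neg hj0]
            by_cases hj1 : i.val + 1 = j.val
            · have hj : j = ⟨i.val+1, hsi⟩ := Fin.ext (show j.val = i.val + 1 by omega)
              rw [if_pos hj1, if_pos hj, hj,
                if_neg (by intro h; have hv : i.val + 1 = 0 := congrArg Fin.val h; omega)]
              ring
            · rw [if_neg hj1,
                if_neg (by intro h; have hv : j.val = 0 := congrArg Fin.val h; omega),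
                if_neg (by intro h; have hv : j.val = i.val + 1 := congrArg Fin.val h; omega)]
              ring
        rw [Finset.sum_congr rfl (fun j _ => hpt j), Finset.sum_add_distrib,
          Finset.sum_ite_eq' Finset.univ, Finset.sum_ite_eq' Finset.univ,
          if_pos (Finset.mem_univ _), if_pos (Finset.mem_univ _)]
        have esi : q ⟨i.val+1, hsi⟩ = ((n:ℝ)-1+(1-α))*(1-(1-α)^(n-(i.val+1)))/D := by
          rw [hq]; simp
        have hsplit : (1-α)^(n-i.val) = (1-α)^(n-(i.val+1)) * (1-α) := by
          rw [← pow_succ]; congr 1; omega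
        rw [ei, hqz, esi, hbn, hsplit]
        field_simp
        rw [hD, hbn1]
        ring
  -- conclude : influence = (α/n) • q
  have hinf : ∀ i, influence α X i = (α / (n:ℝ)) * q i := by
    intro i
    have hiu : IsUnit M.det := isUnit_iff_ne_zero.mpr hdet
    have : M⁻¹ *ᵥ (fun _ => 1) = q := by
      rw [← hMq, Matrix.mulVec_mulVec, Matrix.nonsing_inv_mul M hiu, Matrix.one_mulVec]
    rw [influence, ← hM, this]; rfl
  -- the bounds on q
  have hq1 : ∀ i, 1 ≤ q i ∧ q i ≤ 1/α^2 := by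
    intro i
    have hα2 : (0:ℝ) < α^2 := by positivity
    by_cases hi0 : i.val = 0
    · have e1 : q i = ((n:ℝ)-1)*(1-(1-α)^n)/D := by rw [hq]; simp [hi0]
      rw [e1, hbn]
      constructor
      · rw [le_div_iff₀ hD0, one_mul, hD, hbn1]
        nlinarith [mul_nonneg (sq_nonneg (1-α)) (sub_nonneg.mpr hc1),
          mul_le_mul_of_nonneg_left (show c*(1-α) ≤ 1-α by nlinarith) hN1.le]
      · rw [div_le_div_iff₀ hD0 hα2, hD, hbn1]
        rcases le_or_gt (α * ((n:ℝ)-1)) 1 with hcase | hcase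
        · nlinarith [mul_nonneg (sub_nonneg.mpr hcB)
            (show (0:ℝ) ≤ (1-α)^2 + α^2*((n:ℝ)-1)*(1-α) by positivity),
            mul_pos (mul_pos (mul_pos hα2 hN1) hb0) (show (0:ℝ) < 2 - α*((n:ℝ)-1) by linarith)]
        · nlinarith [mul_nonneg hc0.le (show (0:ℝ) ≤ (1-α)^2 + α^2*((n:ℝ)-1)*(1-α) by positivity),
            mul_nonneg hb0.le (show (0:ℝ) ≤ α*((n:ℝ)-1) - (1-α) by nlinarith)]
    · have ei : q i = ((n:ℝ)-1+(1-α))*(1-(1-α)^(n-i.val))/D := by rw [hq]; simp [hi0]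
      set d : ℝ := (1-α)^(n-i.val) with hd
      have hd0 : 0 < d := pow_pos hb0 _
      have hdb : d ≤ 1-α := by
        calc d = (1-α)^(n-i.val) := hd
        _ ≤ (1-α)^1 := pow_le_pow_of_le_one hb0.le hb1.le (by omega)
        _ = 1-α := pow_one _
      rw [ei]
      constructor
      · rw [le_div_iff₀ hD0, one_mul, hD, hbn1]
        nlinarith [mul_nonneg (sq_nonneg (1-α)) (sub_nonneg.mpr hc1)]
      · rw [div_le_div_iff₀ hD0 hα2, hD, hbn1]
        nlinarith [mul_le_mul_of_nonneg_left (show 1 - c ≤ ((n:ℝ)-1)*α by nlinarith) (sq_nonneg (1-α)),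
          mul_nonneg (mul_nonneg hα2.le (by linarith : (0:ℝ) ≤ (n:ℝ)-1+(1-α))) hd0.le,
          mul_nonneg (mul_nonneg hα2.le hb0.le) (show (0:ℝ) ≤ (n:ℝ)-2 by linarith)]
  intro i
  obtain ⟨hlo, hhi⟩ := hq1 i
  rw [hinf i]
  have hkey : α / (n:ℝ) * (1/α^2) = 1 / (α * (n:ℝ)) := by
    field_simp
  constructor
  · calc α / (n:ℝ) = (α/(n:ℝ)) * 1 := by ring
    _ ≤ (α/(n:ℝ)) * q i := mul_le_mul_of_nonneg_left hlo (by positivity)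
  · calc (α/(n:ℝ)) * q i ≤ (α/(n:ℝ)) * (1/α^2) := mul_le_mul_of_nonneg_left hhi (by positivity)
    _ = 1 / (α * (n:ℝ)) := hkey
end
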